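/- Let D ≥ 2 be a natural number and let β be a real number with 0 < β ≤ D^{−0.01}. Let M be a nonempty finite set and f : M → ℕ a function with f(m) ≤ D for all m ∈ M. Let (δ_m)_{m∈M} be independent random variables, each exponentially distributed with rate β. Then almost surely there is a unique m* ∈ M minimizing f(m) − δ_m over m ∈ M, and the expectation of f(m*) satisfies E[f(m*)] ≤ 5 · (∑_{i=0}^{D} i·x_i·e^{−iβ}) / (∑_{i=0}^{D} x_i·e^{−iβ}), where x_i := |{m ∈ M : f(m) = i}|. -/

import Mathlib

open MeasureTheory ProbabilityTheory Finset Real Set Filter Topology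
open scoped ENNReal NNReal

lemma expMeasure_singleton {β : ℝ} (v : ℝ) : expMeasure β {v} = 0 := by
  rw [show expMeasure β = volume.withDensity (exponentialPDF β) from rfl,
    withDensity_apply _ (measurableSet_singleton v)]
  simp [lintegral_singleton]

lemma expMeasure_eq (β : ℝ) : expMeasure β = volume.withDensity (exponentialPDF β) := rfl

lemma expMeasure_Iic {β : ℝ} (hβ : 0 < β) (u : ℝ) :
    expMeasure β (Set.Iic u)
      = ENNReal.ofReal (if 0 ≤ u then 1 - Real.exp (-(β * u)) else 0) := by
  rw [expMeasure_eq, withDensity_apply _ measurableSet_Iic,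
    lintegral_exponentialPDF_eq_antiDeriv hβ u]

lemma expMeasure_Iic_le {β : ℝ} (hβ : 0 < β) (u : ℝ) :
    expMeasure β (Set.Iic u) ≤ ENNReal.ofReal (Real.exp (-Real.exp (-(β * u)))) := by
  rw [expMeasure_Iic hβ]
  apply ENNReal.ofReal_le_ofReal
  split_ifs with h
  · have := Real.add_one_le_exp (-Real.exp (-(β * u)))
    linarith
  · positivity

lemma exp_exp_integrableOn {β A : ℝ} (hβ : 0 < β) (hA : 0 ≤ A) :
    IntegrableOn (fun s =>
      β * Real.exp (-(β * s)) * Real.exp (-(A * Real.exp (-(β * s))))) (Set.Ioi (0:ℝ)) := by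
  have hbase : IntegrableOn (fun s : ℝ => β * Real.exp (-β * s)) (Ioi (0:ℝ)) :=
    (exp_neg_integrableOn_Ioi 0 hβ).const_mul β
  apply hbase.mono' ?_ ?_
  · apply Continuous.aestronglyMeasurable
    continuity
  · filter_upwards with s
    have h2 : (0:ℝ) < Real.exp (-(β * s)) := Real.exp_pos _
    have h1 : Real.exp (-(A * Real.exp (-(β * s)))) ≤ 1 := by
      apply Real.exp_le_one_iff.mpr
      nlinarith
    rw [Real.norm_eq_abs, abs_of_nonneg (by positivity), neg_mul]
    nlinarith [mul_pos hβ h2]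

lemma integral_exp_exp {β A : ℝ} (hβ : 0 < β) (hA : 0 < A) :
    ∫ s in Set.Ioi (0:ℝ), β * Real.exp (-(β * s)) * Real.exp (-(A * Real.exp (-(β * s))))
      = (1 - Real.exp (-A)) / A := by
  have hderiv : ∀ s ∈ Ici (0:ℝ), HasDerivAt
      (fun s => Real.exp (-(A * Real.exp (-(β * s)))) / A)
      (β * Real.exp (-(β * s)) * Real.exp (-(A * Real.exp (-(β * s))))) s := by
    intro s _
    have h1 : HasDerivAt (fun s : ℝ => -(β * s)) (-β) s := by
      simpa using ((hasDerivAt_id s).const_mul (-β))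
    have h2 : HasDerivAt (fun s : ℝ => Real.exp (-(β * s)))
        (Real.exp (-(β * s)) * (-β)) s := h1.exp
    have h3 : HasDerivAt (fun s : ℝ => -(A * Real.exp (-(β * s))))
        (A * β * Real.exp (-(β * s))) s := by
      have := (h2.const_mul A).neg
      exact this.congr_deriv (by ring)
    have h5 := h3.exp.div_const A
    exact h5.congr_deriv (by rw [div_eq_iff hA.ne']; ring)
  have htend : Tendsto (fun s => Real.exp (-(A * Real.exp (-(β * s)))) / A)
      atTop (𝓝 (1 / A)) := by
    have h1 : Tendsto (fun s : ℝ => -(β * s)) atTop atBot := by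
      apply tendsto_neg_atBot_iff.mpr
      exact (tendsto_const_mul_atTop_of_pos hβ).mpr tendsto_id
    have h2 : Tendsto (fun s : ℝ => Real.exp (-(β * s))) atTop (𝓝 0) :=
      Real.tendsto_exp_atBot.comp h1
    have h3 : Tendsto (fun s : ℝ => -(A * Real.exp (-(β * s)))) atTop (𝓝 0) := by
      simpa using ((h2.const_mul A).neg)
    have h4 := (Real.continuous_exp.tendsto 0).comp h3
    simpa using h4.div_const A
  rw [integral_Ioi_of_hasDerivAt_of_tendsto' hderiv (exp_exp_integrableOn hβ hA.le) htend]
  simp only [mul_zero, neg_zero, Real.exp_zero, mul_one]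
  field_simp

lemma lintegral_exp_exp_le {β A : ℝ} (hβ : 0 < β) (hA : 0 < A) :
    ∫⁻ s, ENNReal.ofReal (Real.exp (-(A * Real.exp (-(β * s))))) ∂(expMeasure β)
      ≤ ENNReal.ofReal ((1 - Real.exp (-A)) / A) := by
  have hmf : Measurable fun s : ℝ => ENNReal.ofReal (Real.exp (-(A * Real.exp (-(β * s))))) := by
    apply Measurable.ennreal_ofReal
    exact (Continuous.rexp (by continuity)).measurable
  have hpdf : Measurable (exponentialPDF β) := (measurable_exponentialPDFReal β).ennreal_ofReal
  rw [expMeasure_eq, lintegral_withDensity_eq_lintegral_mul _ hpdf hmf]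
  have hsplit := (lintegral_add_compl
    (fun s => (exponentialPDF β * fun s =>
      ENNReal.ofReal (Real.exp (-(A * Real.exp (-(β * s)))))) s)
    (measurableSet_Ici (a := (0:ℝ))) (μ := volume))
  rw [← hsplit]
  have hneg : ∫⁻ s in (Set.Ici (0:ℝ))ᶜ, (exponentialPDF β * fun s =>
      ENNReal.ofReal (Real.exp (-(A * Real.exp (-(β * s)))))) s ∂volume = 0 := by
    rw [Set.compl_Ici]
    rw [setLIntegral_congr_fun (g := fun _ => 0) measurableSet_Iio
      (fun s (hs : s < 0) => by
        simp [exponentialPDF_of_neg hs]), lintegral_zero]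
  rw [hneg, add_zero]
  have hpos : ∫⁻ s in Set.Ici (0:ℝ), (exponentialPDF β * fun s =>
      ENNReal.ofReal (Real.exp (-(A * Real.exp (-(β * s)))))) s ∂volume
      = ∫⁻ s in Set.Ici (0:ℝ), ENNReal.ofReal
        (β * Real.exp (-(β * s)) * Real.exp (-(A * Real.exp (-(β * s))))) ∂volume := by
    refine setLIntegral_congr_fun measurableSet_Ici (fun s hs => ?_)
    simp only [Pi.mul_apply, exponentialPDF_of_nonneg hs]
    rw [← ENNReal.ofReal_mul (by positivity)]
  rw [hpos]
  rw [← ofReal_integral_eq_lintegral_ofReal ?hint ?hnn]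
  · apply ENNReal.ofReal_le_ofReal
    rw [MeasureTheory.integral_Ici_eq_integral_Ioi, integral_exp_exp hβ hA]
  case hint =>
    exact (integrableOn_Ici_iff_integrableOn_Ioi).mpr (exp_exp_integrableOn hβ hA.le)
  case hnn =>
    filter_upwards with s
    positivity

lemma joint_law {Ω : Type*} [MeasurableSpace Ω] (μ : Measure Ω) [IsProbabilityMeasure μ]
    {M : Type*} [Fintype M] {β : ℝ} (hβ : 0 < β)
    (δ : M → Ω → ℝ) (hδmeas : ∀ m, Measurable (δ m))
    (hindep : iIndepFun δ μ)
    (hdist : ∀ m, μ.map (δ m) = expMeasure β) :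
    μ.map (fun ω (m : M) => δ m ω) = Measure.pi (fun _ => expMeasure β) := by
  have hprob : IsProbabilityMeasure (expMeasure β) := isProbabilityMeasure_expMeasure hβ
  have hΦ : Measurable (fun ω (m : M) => δ m ω) := measurable_pi_lambda _ hδmeas
  refine (Measure.pi_eq fun s hs => ?_).symm
  rw [Measure.map_apply hΦ (MeasurableSet.univ_pi hs)]
  have hpre : (fun ω (m : M) => δ m ω) ⁻¹' (Set.pi Set.univ s) = ⋂ m ∈ Finset.univ, δ m ⁻¹' s m := by
    ext ω; simp [Set.mem_pi]
  rw [hpre, hindep.measure_inter_preimage_eq_mul Finset.univ (fun i _ => hs i)]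
  refine Finset.prod_congr rfl fun m _ => ?_
  rw [← hdist m, Measure.map_apply (hδmeas m) (hs m)]

lemma pi_bound {M : Type*} [Fintype M] [Nonempty M] {β : ℝ} (hβ : 0 < β)
    (f : M → ℕ) (m : M) :
    Measure.pi (fun _ : M => expMeasure β)
      {g : M → ℝ | ∀ m', g m' ≤ g m + ((f m' : ℝ) - (f m : ℝ))} ≤
    ENNReal.ofReal (5 * Real.exp (-(β * (f m : ℝ)))
      / ∑ m' : M, Real.exp (-(β * (f m' : ℝ)))) := by
  classical
  have hprob : IsProbabilityMeasure (expMeasure β) := isProbabilityMeasure_expMeasure hβ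
  set ν := expMeasure β with hν
  set i : ℝ := (f m : ℝ) with hi
  set B : ℝ := ∑ m' : M, Real.exp (-(β * (f m' : ℝ))) with hB
  have hBpos : 0 < B := Finset.sum_pos (fun _ _ => Real.exp_pos _) Finset.univ_nonempty
  have hprod1 : Real.exp (-(β * i)) * Real.exp (β * i) = 1 := by
    rw [← Real.exp_add]; simp
  by_cases hcase : Real.exp (β * i) * B ≤ 5
  · refine le_trans prob_le_one ?_
    rw [show (1 : ℝ≥0∞) = ENNReal.ofReal 1 by simp]
    apply ENNReal.ofReal_le_ofReal
    rw [le_div_iff₀ hBpos, one_mul]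
    nlinarith [Real.exp_pos (-(β * i)), Real.exp_pos (β * i)]
  push_neg at hcase
  set A : ℝ := ∑ m' ∈ Finset.univ.erase m, Real.exp (-(β * ((f m' : ℝ) - i))) with hA
  have hAeq : A = Real.exp (β * i) * B - 1 := by
    have h1 : ∀ m' : M, Real.exp (-(β * ((f m' : ℝ) - i)))
        = Real.exp (β * i) * Real.exp (-(β * (f m' : ℝ))) := by
      intro m'; rw [← Real.exp_add]; ring_nf
    rw [hA, Finset.sum_congr rfl (fun m' _ => h1 m'), ← Finset.mul_sum]
    have h2 : ∑ m' ∈ Finset.univ.erase m, Real.exp (-(β * (f m' : ℝ)))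
        = B - Real.exp (-(β * i)) := by
      rw [hB]
      rw [← Finset.sum_erase_add Finset.univ _ (Finset.mem_univ m)]
      simp [hi]
    rw [h2, mul_sub]
    nlinarith [hprod1]
  have hA4 : 4 < A := by rw [hAeq]; linarith
  have hA0 : 0 < A := by linarith
  -- the split machinery
  haveI : Unique {x : M // x = m} := ⟨⟨⟨m, rfl⟩⟩, fun a => Subtype.ext a.2⟩
  haveI : Fintype {x : M // x = m} := Unique.fintype
  set S' : Set (({x : M // x = m} → ℝ) × ({x : M // ¬x = m} → ℝ)) :=
    {ab | ∀ m' : {x : M // ¬x = m}, ab.2 m' ≤ ab.1 ⟨m, rfl⟩ + ((f m'.1 : ℝ) - i)} with hS'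
  have hS'meas : MeasurableSet S' := by
    have : S' = ⋂ m' : {x : M // ¬x = m},
        {ab : ({x : M // x = m} → ℝ) × ({x : M // ¬x = m} → ℝ) |
          ab.2 m' ≤ ab.1 ⟨m, rfl⟩ + ((f m'.1 : ℝ) - i)} := by
      ext ab; simp [hS']
    rw [this]
    refine MeasurableSet.iInter fun m' => ?_
    exact measurableSet_le (by fun_prop) (by fun_prop)
  have hmp := measurePreserving_piEquivPiSubtypeProd (fun _ : M => ν) (fun x => x = m)
  have hpre : {g : M → ℝ | ∀ m', g m' ≤ g m + ((f m' : ℝ) - i)}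
      = (MeasurableEquiv.piEquivPiSubtypeProd (fun _ : M => ℝ) (fun x => x = m)) ⁻¹' S' := by
    ext g
    simp only [Set.mem_setOf_eq, Set.mem_preimage, MeasurableEquiv.piEquivPiSubtypeProd,
      Equiv.piEquivPiSubtypeProd, MeasurableEquiv.coe_mk, Equiv.coe_fn_mk, hS']
    constructor
    · intro h m'
      exact h m'.1
    · intro h m'
      by_cases hm' : m' = m
      · subst hm'; simp [hi]
      · exact h ⟨m', hm'⟩
  have step1 : Measure.pi (fun _ : M => ν) {g : M → ℝ | ∀ m', g m' ≤ g m + ((f m' : ℝ) - i)}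
      = ∫⁻ s, ∏ m' : {x : M // ¬x = m}, ν (Set.Iic (s + ((f m'.1 : ℝ) - i))) ∂ν := by
    rw [hpre, hmp.measure_preimage hS'meas.nullMeasurableSet]
    rw [Measure.prod_apply hS'meas]
    have hsec : ∀ a : {x : M // x = m} → ℝ, Prod.mk a ⁻¹' S'
        = Set.pi Set.univ (fun m' : {x : M // ¬x = m} =>
            Set.Iic (a ⟨m, rfl⟩ + ((f m'.1 : ℝ) - i))) := by
      intro a; ext b
      simp only [Set.mem_preimage, Set.mem_setOf_eq, Set.mem_pi, Set.mem_univ, true_implies,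
        Set.mem_Iic, hS']
    have hrw : (fun a : {x : M // x = m} → ℝ =>
        Measure.pi (fun _ : {x : M // ¬x = m} => ν) (Prod.mk a ⁻¹' S'))
        = fun a => ∏ m' : {x : M // ¬x = m}, ν (Set.Iic (a ⟨m, rfl⟩ + ((f m'.1 : ℝ) - i))) := by
      funext a; rw [hsec a, Measure.pi_pi]
    rw [hrw]
    have hemb := (MeasurableEquiv.funUnique {x : M // x = m} ℝ).measurableEmbedding
    have hcv := (measurePreserving_funUnique ν {x : M // x = m}).lintegral_comp_emb hemb
      (fun s => ∏ m' : {x : M // ¬x = m}, ν (Set.Iic (s + ((f m'.1 : ℝ) - i))))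
    refine Eq.trans ?_ hcv
    congr! 2
    next a =>
      have hx : (MeasurableEquiv.funUnique {x : M // x = m} ℝ) a = a ⟨m, rfl⟩ := by
        simp only [MeasurableEquiv.funUnique, Equiv.funUnique, MeasurableEquiv.coe_mk,
          Equiv.coe_fn_mk]
        exact congrArg a (Subsingleton.elim _ _)
      rw [hx]
  rw [step1]
  have step2 : ∀ s : ℝ, ∏ m' : {x : M // ¬x = m}, ν (Set.Iic (s + ((f m'.1 : ℝ) - i)))
      ≤ ENNReal.ofReal (Real.exp (-(A * Real.exp (-(β * s))))) := by
    intro s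
    calc ∏ m' : {x : M // ¬x = m}, ν (Set.Iic (s + ((f m'.1 : ℝ) - i)))
        ≤ ∏ m' : {x : M // ¬x = m},
            ENNReal.ofReal (Real.exp (-Real.exp (-(β * (s + ((f m'.1 : ℝ) - i)))))) :=
          Finset.prod_le_prod' fun m' _ => expMeasure_Iic_le hβ _
      _ = ENNReal.ofReal (∏ m' : {x : M // ¬x = m},
            Real.exp (-Real.exp (-(β * (s + ((f m'.1 : ℝ) - i)))))) :=
          (ENNReal.ofReal_prod_of_nonneg (fun _ _ => (Real.exp_pos _).le)).symm
      _ = ENNReal.ofReal (Real.exp (-(A * Real.exp (-(β * s))))) := by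
          congr 1
          rw [← Real.exp_sum]
          congr 1
          have h1 : ∀ m' : {x : M // ¬x = m},
              -Real.exp (-(β * (s + ((f m'.1 : ℝ) - i))))
              = -(Real.exp (-(β * ((f m'.1 : ℝ) - i))) * Real.exp (-(β * s))) := by
            intro m'; rw [← Real.exp_add]; ring_nf
          rw [Finset.sum_congr rfl (fun m' _ => h1 m'), Finset.sum_neg_distrib,
            ← Finset.sum_mul]
          have h2 : ∑ m' : {x : M // ¬x = m}, Real.exp (-(β * ((f m'.1 : ℝ) - i))) = A := by
            rw [hA]
            rw [Finset.sum_subtype (p := fun x => ¬x = m) (Finset.univ.erase m)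
              (by intro x; simp [Finset.mem_erase]) (fun m' => Real.exp (-(β * ((f m' : ℝ) - i))))]
          rw [h2]
  calc ∫⁻ s, ∏ m' : {x : M // ¬x = m}, ν (Set.Iic (s + ((f m'.1 : ℝ) - i))) ∂ν
      ≤ ∫⁻ s, ENNReal.ofReal (Real.exp (-(A * Real.exp (-(β * s))))) ∂ν :=
        lintegral_mono step2
    _ ≤ ENNReal.ofReal ((1 - Real.exp (-A)) / A) := lintegral_exp_exp_le hβ hA0
    _ ≤ ENNReal.ofReal (5 * Real.exp (-(β * i)) / B) := by
        apply ENNReal.ofReal_le_ofReal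
        rw [div_le_div_iff₀ hA0 hBpos]
        have hexpA : 0 < Real.exp (-A) := Real.exp_pos _
        have h5 : (1 - Real.exp (-A)) ≤ 1 := by linarith
        have : B * 1 ≤ 5 * Real.exp (-(β * i)) * A := by
          rw [hAeq]
          nlinarith [Real.exp_pos (-(β * i))]
        nlinarith [Real.exp_pos (-(β * i))]

/-- Lemma 1 (`lem:edist`) of the paper: with independent rate-`β` exponential
variables `δ_m`, almost surely there is a unique `m*` minimizing `f m - δ m`, and
the expectation of `f m*` is at most `5 · T_β / B_β`. -/
theorem stmt_3 {Ω : Type*} [MeasurableSpace Ω] (μ : Measure Ω) [IsProbabilityMeasure μ]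
    (D : ℕ) (hD : 2 ≤ D) (β : ℝ) (hβ0 : 0 < β) (hβD : β ≤ (D : ℝ) ^ (-(0.01) : ℝ))
    {M : Type*} [Fintype M] [Nonempty M] [MeasurableSpace M] [MeasurableSingletonClass M]
    (f : M → ℕ) (hf : ∀ m, f m ≤ D)
    (δ : M → Ω → ℝ) (hδmeas : ∀ m, Measurable (δ m))
    (hindep : iIndepFun δ μ)
    (hdist : ∀ m, μ.map (δ m) = expMeasure β)
    (x : ℕ → ℝ) (hx : ∀ i, x i = ((Finset.univ.filter (fun m : M => f m = i)).card : ℝ)) :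
    (∀ᵐ ω ∂μ, ∃! m : M, ∀ m' : M,
        (f m : ℝ) - δ m ω ≤ (f m' : ℝ) - δ m' ω) ∧
    ∀ mStar : Ω → M, Measurable mStar →
      (∀ᵐ ω ∂μ, ∀ m' : M,
        (f (mStar ω) : ℝ) - δ (mStar ω) ω ≤ (f m' : ℝ) - δ m' ω) →
      (∫ ω, (f (mStar ω) : ℝ) ∂μ) ≤
        5 * (∑ i ∈ Finset.range (D + 1), (i : ℝ) * x i * Real.exp (-(i : ℝ) * β)) /
            (∑ i ∈ Finset.range (D + 1), x i * Real.exp (-(i : ℝ) * β)) := by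
  classical
  have hprob : IsProbabilityMeasure (expMeasure β) := isProbabilityMeasure_expMeasure hβ0
  have hΦ : Measurable (fun ω (m : M) => δ m ω) := measurable_pi_lambda _ hδmeas
  have hjoint := joint_law μ hβ0 δ hδmeas hindep hdist
  have hdiff : ∀ m m' : M, m ≠ m' →
      μ {ω | (f m : ℝ) - δ m ω = (f m' : ℝ) - δ m' ω} = 0 := by
    intro m m' hne
    have hpair : IndepFun (δ m) (δ m') μ := hindep.indepFun hne
    have hmap := (ProbabilityTheory.indepFun_iff_map_prod_eq_prod_map_map
      (hδmeas m).aemeasurable (hδmeas m').aemeasurable).mp hpair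
    set c : ℝ := (f m : ℝ) - (f m' : ℝ) with hc
    have hset : {ω | (f m : ℝ) - δ m ω = (f m' : ℝ) - δ m' ω}
        = (fun ω => (δ m ω, δ m' ω)) ⁻¹' {p : ℝ × ℝ | p.1 - p.2 = c} := by
      ext ω
      simp only [Set.mem_setOf_eq, Set.mem_preimage, hc]
      constructor <;> intro h <;> linarith
    have hms : MeasurableSet {p : ℝ × ℝ | p.1 - p.2 = c} :=
      measurableSet_eq_fun (by fun_prop) measurable_const
    rw [hset, ← Measure.map_apply ((hδmeas m).prodMk (hδmeas m')) hms, hmap,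
      hdist m, hdist m', Measure.prod_apply hms]
    have hsec : ∀ a : ℝ, (Prod.mk a ⁻¹' {p : ℝ × ℝ | p.1 - p.2 = c}) = {a - c} := by
      intro a; ext b
      simp only [Set.mem_preimage, Set.mem_setOf_eq, Set.mem_singleton_iff]
      constructor <;> intro h <;> linarith
    have : ∀ a : ℝ, expMeasure β (Prod.mk a ⁻¹' {p : ℝ × ℝ | p.1 - p.2 = c}) = 0 := by
      intro a; rw [hsec a]; exact expMeasure_singleton _
    simp only [this, lintegral_zero]
  have hae : ∀ᵐ ω ∂μ, ∀ m m' : M, m ≠ m' →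
      (f m : ℝ) - δ m ω ≠ (f m' : ℝ) - δ m' ω := by
    rw [ae_all_iff]
    intro m
    rw [ae_all_iff]
    intro m'
    by_cases hne : m = m'
    · subst hne
      filter_upwards with ω h
      exact absurd rfl h
    · have h0 : ∀ᵐ ω ∂μ, ¬((f m : ℝ) - δ m ω = (f m' : ℝ) - δ m' ω) := by
        rw [ae_iff]
        simpa only [not_not] using hdiff m m' hne
      filter_upwards [h0] with ω h _
      exact h
  constructor
  · filter_upwards [hae] with ω hω
    obtain ⟨m, -, hm⟩ := Finset.exists_min_image Finset.univ
      (fun m => (f m : ℝ) - δ m ω) ⟨Classical.arbitrary M, Finset.mem_univ _⟩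
    refine ⟨m, fun m' => hm m' (Finset.mem_univ _), ?_⟩
    intro y hy
    by_contra hne
    exact hω y m hne (le_antisymm (hy m) (hm y (Finset.mem_univ _)))
  · intro mStar hmeasStar hminStar
    set B : ℝ := ∑ m' : M, Real.exp (-(β * (f m' : ℝ))) with hB
    have hBpos : 0 < B := Finset.sum_pos (fun _ _ => Real.exp_pos _) Finset.univ_nonempty
    have hEbound : ∀ m : M, μ (mStar ⁻¹' {m})
        ≤ ENNReal.ofReal (5 * Real.exp (-(β * (f m : ℝ))) / B) := by
      intro m
      set S : Set (M → ℝ) := {g | ∀ m', g m' ≤ g m + ((f m' : ℝ) - (f m : ℝ))} with hSdef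
      have hS : MeasurableSet S := by
        have : S = ⋂ m' : M, {g : M → ℝ | g m' ≤ g m + ((f m' : ℝ) - (f m : ℝ))} := by
          ext g; simp [hSdef]
        rw [this]
        exact MeasurableSet.iInter fun m' => measurableSet_le (by fun_prop) (by fun_prop)
      have hsub : mStar ⁻¹' {m} ≤ᵐ[μ] (fun ω (m : M) => δ m ω) ⁻¹' S := by
        filter_upwards [hminStar] with ω h hmem
        have hsm : mStar ω = m := hmem
        intro m'
        have h2 := h m'
        rw [hsm] at h2
        simp only
        linarith
      calc μ (mStar ⁻¹' {m}) ≤ μ ((fun ω (m : M) => δ m ω) ⁻¹' S) := measure_mono_ae hsub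
        _ = (μ.map (fun ω (m : M) => δ m ω)) S := (Measure.map_apply hΦ hS).symm
        _ = Measure.pi (fun _ => expMeasure β) S := by rw [hjoint]
        _ ≤ _ := pi_bound hβ0 f m
    have hint : ∫ ω, (f (mStar ω) : ℝ) ∂μ
        = ∑ m : M, (μ (mStar ⁻¹' {m})).toReal * (f m : ℝ) := by
      have hrepr : (fun ω => (f (mStar ω) : ℝ))
          = fun ω => ∑ m : M, Set.indicator (mStar ⁻¹' {m}) (fun _ => (f m : ℝ)) ω := by
        funext ω
        rw [Finset.sum_eq_single (mStar ω)]
        · rw [Set.indicator_of_mem (by simp)]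
        · intro m _ hm
          exact Set.indicator_of_notMem (by simp [Ne.symm hm]) _
        · intro h; exact absurd (Finset.mem_univ _) h
      rw [hrepr, integral_finset_sum]
      · refine Finset.sum_congr rfl fun m _ => ?_
        rw [integral_indicator_const _ (hmeasStar (measurableSet_singleton m))]
        simp [mul_comm, Measure.real]
      · intro m _
        exact (integrable_const _).indicator (hmeasStar (measurableSet_singleton m))
    rw [hint]
    have hterm : ∀ m : M, (μ (mStar ⁻¹' {m})).toReal * (f m : ℝ)
        ≤ (5 * Real.exp (-(β * (f m : ℝ))) / B) * (f m : ℝ) := by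
      intro m
      apply mul_le_mul_of_nonneg_right _ (Nat.cast_nonneg _)
      exact ENNReal.toReal_le_of_le_ofReal (by positivity) (hEbound m)
    refine le_trans (Finset.sum_le_sum fun m _ => hterm m) ?_
    have hT : ∑ m : M, (5 * Real.exp (-(β * (f m : ℝ))) / B) * (f m : ℝ)
        = 5 * (∑ m : M, (f m : ℝ) * Real.exp (-(β * (f m : ℝ)))) / B := by
      have h1 : ∀ m : M, (5 * Real.exp (-(β * (f m : ℝ))) / B) * (f m : ℝ)
          = (5 * ((f m : ℝ) * Real.exp (-(β * (f m : ℝ))))) / B := fun m => by ring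
      rw [Finset.sum_congr rfl fun m _ => h1 m, ← Finset.sum_div, ← Finset.mul_sum]
    rw [hT]
    have hgroup : ∀ φ : ℕ → ℝ, ∑ m : M, φ (f m)
        = ∑ i ∈ Finset.range (D + 1), x i * φ i := by
      intro φ
      rw [← Finset.sum_fiberwise_of_maps_to (g := f) (t := Finset.range (D + 1))
        (fun m _ => Finset.mem_range.mpr (Nat.lt_succ_of_le (hf m))) (fun m => φ (f m))]
      refine Finset.sum_congr rfl fun i _ => ?_
      rw [Finset.sum_congr rfl (fun m hm => by rw [(Finset.mem_filter.mp hm).2]),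
        Finset.sum_const, hx i]
      simp [nsmul_eq_mul]
    have hTeq : ∑ m : M, (f m : ℝ) * Real.exp (-(β * (f m : ℝ)))
        = ∑ i ∈ Finset.range (D + 1), (i : ℝ) * x i * Real.exp (-(i : ℝ) * β) := by
      rw [hgroup (fun i => (i : ℝ) * Real.exp (-(β * (i : ℝ))))]
      refine Finset.sum_congr rfl fun i _ => ?_
      rw [show -(β * (i : ℝ)) = -(i : ℝ) * β by ring]
      ring
    have hBeq : B = ∑ i ∈ Finset.range (D + 1), x i * Real.exp (-(i : ℝ) * β) := by
      rw [hB, hgroup (fun i => Real.exp (-(β * (i : ℝ))))]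
      refine Finset.sum_congr rfl fun i _ => ?_
      rw [show -(β * (i : ℝ)) = -(i : ℝ) * β by ring]
    rw [hTeq, hBeq]
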